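/- arXiv:1410.7219 — 2 statements merged into one kernel-verified Lean document; each statement's English description precedes it below -/
import Mathlib

section
/- (Euler's pentagonal number theorem, specialization z=2 of Nekrasov–Okounkov) As formal power series, ∏_{n≥1} (1 - x^n) = ∑_{n ∈ ℤ} (-1)^n x^{(3n^2+n)/2}. -/
open PowerSeries Finset

noncomputable section PentagonalAux
open scoped Classical
def mnF (S : Finset ℕ) : ℕ := if h : S.Nonempty then S.min' h else 0
def mxF (S : Finset ℕ) : ℕ := if h : S.Nonempty then S.max' h else 0
def sigF (S : Finset ℕ) : ℕ := if h : ∃ j, mxF S - j ∉ S then Nat.find h else 0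
def IsExc (S : Finset ℕ) : Prop :=
  S = Icc (mnF S) (2 * mnF S - 1) ∨ S = Icc (mnF S) (2 * mnF S - 2)

def gmap (S : Finset ℕ) : Finset ℕ :=
  if mnF S ≤ sigF S then insert (mxF S + 1) ((S.erase (mnF S)).erase (mxF S - mnF S + 1))
  else insert (sigF S) (insert (mxF S - sigF S) (S.erase (mxF S)))

variable {S : Finset ℕ}

lemma mn_mem (hne : S.Nonempty) : mnF S ∈ S := by
  rw [mnF, dif_pos hne]; exact S.min'_mem hne
lemma mn_le (hne : S.Nonempty) {x : ℕ} (hx : x ∈ S) : mnF S ≤ x := by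
  rw [mnF, dif_pos hne]; exact S.min'_le x hx
lemma mx_mem (hne : S.Nonempty) : mxF S ∈ S := by
  rw [mxF, dif_pos hne]; exact S.max'_mem hne
lemma le_mx (hne : S.Nonempty) {x : ℕ} (hx : x ∈ S) : x ≤ mxF S := by
  rw [mxF, dif_pos hne]; exact S.le_max' x hx
lemma one_le_mn (hne : S.Nonempty) (h0 : 0 ∉ S) : 1 ≤ mnF S :=
  Nat.one_le_iff_ne_zero.2 (fun h => h0 (h ▸ mn_mem hne))
lemma mn_le_mx (hne : S.Nonempty) : mnF S ≤ mxF S := le_mx hne (mn_mem hne)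

lemma sig_ex (h0 : 0 ∉ S) : ∃ j, mxF S - j ∉ S := ⟨mxF S, by rw [Nat.sub_self]; exact h0⟩

lemma sig_spec (h0 : 0 ∉ S) : mxF S - sigF S ∉ S := by
  rw [sigF, dif_pos (sig_ex h0)]; exact Nat.find_spec (sig_ex h0)

lemma sig_pos (hne : S.Nonempty) (h0 : 0 ∉ S) : 1 ≤ sigF S := by
  rw [sigF, dif_pos (sig_ex h0)]
  rcases Nat.eq_zero_or_pos (Nat.find (sig_ex h0)) with h | h
  · exfalso
    have := Nat.find_spec (sig_ex (S := S) h0)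
    rw [show Nat.find (sig_ex (S := S) h0) = 0 from h, Nat.sub_zero] at this
    exact this (mx_mem hne)
  · exact h

lemma sig_le (h0 : 0 ∉ S) : sigF S ≤ mxF S := by
  rw [sigF, dif_pos (sig_ex h0)]
  exact Nat.find_le (by rw [Nat.sub_self]; exact h0)

lemma sig_run (hne : S.Nonempty) (h0 : 0 ∉ S) {x : ℕ} (h1 : mxF S - sigF S < x)
    (h2 : x ≤ mxF S) : x ∈ S := by
  have hs := sig_le (S := S) h0
  have hj : mxF S - x < sigF S := by omega
  rw [sigF, dif_pos (sig_ex h0)] at hj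
  have := Nat.find_min (sig_ex h0) hj
  rw [not_not] at this
  have hx : mxF S - (mxF S - x) = x := by omega
  rwa [hx] at this

lemma sig_eq_of (h0 : 0 ∉ S) {k : ℕ} (h1 : mxF S - k ∉ S) (h2 : ∀ j < k, mxF S - j ∈ S) :
    sigF S = k := by
  rw [sigF, dif_pos (sig_ex h0), Nat.find_eq_iff]
  exact ⟨h1, fun m hm => not_not_intro (h2 m hm)⟩

lemma sig_ge_of (h0 : 0 ∉ S) {k : ℕ} (h2 : ∀ j < k, mxF S - j ∈ S) : k ≤ sigF S := by
  rw [sigF, dif_pos (sig_ex h0), Nat.le_find_iff]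
  exact fun m hm => not_not_intro (h2 m hm)

lemma sig_le_of_min (hne : S.Nonempty) (h0 : 0 ∉ S) : sigF S ≤ mxF S - mnF S + 1 := by
  by_contra h
  push_neg at h
  have h2 : mxF S - (mxF S - mnF S + 1) ∈ S := by
    rw [sigF, dif_pos (sig_ex h0)] at h
    have := Nat.find_min (sig_ex (S := S) h0) h
    rwa [not_not] at this
  have h3 := mn_le hne h2
  have h4 := mn_le_mx hne
  have h5 := one_le_mn hne h0
  omega

lemma mn_Icc {a b : ℕ} (hab : a ≤ b) : mnF (Icc a b) = a := by
  have hne : (Icc a b).Nonempty := ⟨a, by simp [hab]⟩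
  refine le_antisymm (mn_le hne (by simp [hab])) ?_
  have := mn_mem (S := Icc a b) hne
  simp only [mem_Icc] at this
  exact this.1

lemma mx_Icc {a b : ℕ} (hab : a ≤ b) : mxF (Icc a b) = b := by
  have hne : (Icc a b).Nonempty := ⟨a, by simp [hab]⟩
  refine le_antisymm ?_ (le_mx hne (by simp [hab]))
  have := mx_mem (S := Icc a b) hne
  simp only [mem_Icc] at this
  exact this.2

lemma sig_Icc {a b : ℕ} (ha : 1 ≤ a) (hab : a ≤ b) : sigF (Icc a b) = b - a + 1 := by
  have h0 : 0 ∉ Icc a b := by simp; omega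
  refine sig_eq_of h0 ?_ ?_
  · rw [mx_Icc hab]; simp; omega
  · intro j hj; rw [mx_Icc hab]; simp; omega


lemma caseA_twomul (hne : S.Nonempty) (h0 : 0 ∉ S) (hA : mnF S ≤ sigF S) (hexc : ¬ IsExc S) :
    2 * mnF S ≤ mxF S := by
  set a := mnF S with ha
  set b := mxF S with hb
  by_contra h
  push_neg at h
  have h1 := one_le_mn hne h0
  have hab := mn_le_mx hne
  have hsl := sig_le (S := S) h0
  have hIcc : S = Icc a b := by
    refine Finset.ext (fun x => ?_)
    simp only [mem_Icc]
    constructor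
    · intro hx; exact ⟨mn_le hne hx, le_mx hne hx⟩
    · rintro ⟨hx1, hx2⟩
      refine sig_run hne h0 ?_ hx2
      omega
  have hsig : sigF S = b - a + 1 := by
    rw [hIcc] at hA hsl ⊢
    exact sig_Icc h1 hab
  have hb2 : b = 2 * a - 1 := by omega
  refine hexc (Or.inl ?_)
  conv_lhs => rw [hIcc]
  rw [← ha]
  congr 1

lemma caseA_main (hne : S.Nonempty) (h0 : 0 ∉ S) (hA : mnF S ≤ sigF S) (hexc : ¬ IsExc S) :
    (gmap S).sum id = S.sum id ∧ S.card = (gmap S).card + 1 ∧ (gmap S).Nonempty ∧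
    0 ∉ gmap S ∧ ¬ IsExc (gmap S) ∧ gmap (gmap S) = S := by
  have h2 := caseA_twomul hne h0 hA hexc
  set a := mnF S with ha'
  set b := mxF S with hb'
  set c := b - a + 1 with hc'
  have h1 := one_le_mn hne h0
  have hab := mn_le_mx hne
  have hsl := sig_le (S := S) h0
  have hsm := sig_le_of_min hne h0
  have haS : a ∈ S := mn_mem hne
  have hbS : b ∈ S := mx_mem hne
  have hcS : c ∈ S := sig_run hne h0 (by omega) (by omega)
  have hac : a ≠ c := by omega
  set T := (S.erase a).erase c with hT'
  have hcT : c ∈ S.erase a := mem_erase.2 ⟨Ne.symm hac, hcS⟩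
  have hTsub : ∀ x ∈ T, x ∈ S := fun x hx => mem_of_mem_erase (mem_of_mem_erase hx)
  have hbT : b + 1 ∉ T := fun h => by have := le_mx hne (hTsub _ h); omega
  have hgm : gmap S = insert (b+1) T := by rw [gmap, if_pos hA]
  -- membership description of gmap S
  have hmem : ∀ x, x ∈ gmap S ↔ (x = b + 1 ∨ (x ∈ S ∧ x ≠ a ∧ x ≠ c)) := by
    intro x
    rw [hgm, mem_insert, hT', mem_erase, mem_erase]
    tauto
  -- card
  have hcardT : T.card + 2 = S.card := by
    rw [hT', card_erase_of_mem hcT, card_erase_of_mem haS]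
    have : 2 ≤ S.card := Finset.one_lt_card.2 ⟨a, haS, c, hcS, hac⟩
    omega
  have hcard : S.card = (gmap S).card + 1 := by
    rw [hgm, card_insert_of_notMem hbT]; omega
  -- sum
  have hsum : (gmap S).sum id = S.sum id := by
    have e1 : T.sum id + c = (S.erase a).sum id := Finset.sum_erase_add _ _ hcT
    have e2 : (S.erase a).sum id + a = S.sum id := Finset.sum_erase_add _ _ haS
    rw [hgm, Finset.sum_insert hbT]
    simp only [id] at e1 e2 ⊢
    omega
  -- 0 ∉, nonempty
  have hg0 : 0 ∉ gmap S := by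
    rw [hmem]
    rintro (h | ⟨h, -⟩)
    · omega
    · exact h0 h
  have hgne : (gmap S).Nonempty := ⟨b+1, (hmem _).2 (Or.inl rfl)⟩
  -- extremes of gmap S
  have hgmx : mxF (gmap S) = b + 1 := by
    refine le_antisymm ?_ (le_mx hgne ((hmem _).2 (Or.inl rfl)))
    have := mx_mem hgne
    rw [hmem] at this
    rcases this with h | ⟨h, -⟩
    · omega
    · have := le_mx hne h; omega
  have hgt : ∀ x ∈ gmap S, a < x := by
    intro x hx
    rw [hmem] at hx
    rcases hx with h | ⟨h1x, h2x, -⟩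
    · omega
    · have := mn_le hne h1x; omega
  have hgsig : sigF (gmap S) = a := by
    refine sig_eq_of hg0 ?_ ?_
    · rw [hgmx]
      rw [hmem]
      push_neg
      refine ⟨by omega, fun hS => ?_⟩
      intro _
      omega
    · intro j hj
      rw [hgmx, hmem]
      rcases Nat.eq_zero_or_pos j with rfl | hj1
      · exact Or.inl (by omega)
      · refine Or.inr ⟨sig_run hne h0 (by omega) (by omega), by omega, by omega⟩
  have hgmn : ¬ (mnF (gmap S) ≤ sigF (gmap S)) := by
    rw [hgsig]
    have := hgt _ (mn_mem hgne)
    omega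
  -- involution
  have hinv : gmap (gmap S) = S := by
    rw [gmap, if_neg hgmn, hgsig, hgmx]
    have e1 : (gmap S).erase (b+1) = T := by rw [hgm, erase_insert hbT]
    rw [e1]
    have e2 : b + 1 - a = c := by omega
    rw [e2, hT', insert_erase hcT, insert_erase haS]
  -- not exceptional
  have hgexc : ¬ IsExc (gmap S) := by
    rintro (hE | hE)
    · set m := mnF (gmap S) with hm'
      have hm1 : a < m := hgt _ (mn_mem hgne)
      have hmne : m ≤ 2 * m - 1 := by omega
      have : sigF (gmap S) = (2 * m - 1) - m + 1 := by
        rw [hE] at hgsig ⊢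
        exact sig_Icc (by omega) hmne
      omega
    · set m := mnF (gmap S) with hm'
      have hm1 : a < m := hgt _ (mn_mem hgne)
      have hmne2 : (gmap S).Nonempty := hgne
      have hm2 : m ≤ 2 * m - 2 := by
        by_contra hcon
        push_neg at hcon
        rw [hE] at hmne2
        obtain ⟨x, hx⟩ := hmne2
        simp only [mem_Icc] at hx
        omega
      have hsg : sigF (gmap S) = (2 * m - 2) - m + 1 := by
        rw [hE] at hgsig ⊢
        exact sig_Icc (by omega) hm2
      have hmx2 : mxF (gmap S) = 2 * m - 2 := by
        rw [hE] at hgmx ⊢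
        exact mx_Icc hm2
      omega
  exact ⟨hsum, hcard, hgne, hg0, hgexc, hinv⟩


lemma caseB_main (hne : S.Nonempty) (h0 : 0 ∉ S) (hB : ¬ (mnF S ≤ sigF S)) (hexc : ¬ IsExc S) :
    (gmap S).sum id = S.sum id ∧ (gmap S).card = S.card + 1 ∧ (gmap S).Nonempty ∧
    0 ∉ gmap S ∧ ¬ IsExc (gmap S) ∧ gmap (gmap S) = S := by
  push_neg at hB
  set a := mnF S with ha'
  set b := mxF S with hb'
  set s := sigF S with hs'
  have h1 := one_le_mn hne h0
  have hab := mn_le_mx hne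
  have hsl := sig_le (S := S) h0
  have hsp := sig_pos hne h0
  have hbS : b ∈ S := mx_mem hne
  have hbs : b - s ∉ S := sig_spec h0
  -- a ≤ b - s + 1
  have hstp : a ≤ b - s + 1 := mn_le hne (sig_run hne h0 (by omega) (by omega))
  -- 2s < b
  have hb2 : 2 * s < b := by
    by_contra hcon
    push_neg at hcon
    have he1 : a = s + 1 := by omega
    have he2 : b = 2 * s := by omega
    have hIcc : S = Icc a b := by
      refine Finset.ext (fun x => ?_)
      simp only [mem_Icc]
      constructor
      · intro hx; exact ⟨mn_le hne hx, le_mx hne hx⟩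
      · rintro ⟨hx1, hx2⟩
        exact sig_run hne h0 (by omega) hx2
    refine hexc (Or.inr ?_)
    conv_lhs => rw [hIcc]
    rw [← ha']
    congr 1
    omega
  have hsS : s ∉ S := fun h => by have := mn_le hne h; omega
  set B := insert s (insert (b - s) (S.erase b)) with hB'
  have hgm : gmap S = B := by rw [gmap, if_neg (by omega)]
  have hmem : ∀ x, x ∈ gmap S ↔ (x = s ∨ x = b - s ∨ (x ∈ S ∧ x ≠ b)) := by
    intro x
    rw [hgm, hB', mem_insert, mem_insert, mem_erase]
    tauto
  have hfr1 : b - s ∉ S.erase b := fun h => hbs (mem_of_mem_erase h)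
  have hfr2 : s ∉ insert (b - s) (S.erase b) := by
    rw [mem_insert]
    rintro (h | h)
    · omega
    · exact hsS (mem_of_mem_erase h)
  -- card
  have hcard : (gmap S).card = S.card + 1 := by
    rw [hgm, hB', card_insert_of_notMem hfr2, card_insert_of_notMem hfr1,
      card_erase_of_mem hbS]
    have : 1 ≤ S.card := Finset.card_pos.2 hne
    omega
  -- sum
  have hsum : (gmap S).sum id = S.sum id := by
    have e1 : (S.erase b).sum id + b = S.sum id := Finset.sum_erase_add _ _ hbS
    rw [hgm, hB', Finset.sum_insert hfr2, Finset.sum_insert hfr1]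
    simp only [id] at e1 ⊢
    omega
  have hg0 : 0 ∉ gmap S := by
    rw [hmem]
    rintro (h | h | ⟨h, -⟩)
    · omega
    · omega
    · exact h0 h
  have hgne : (gmap S).Nonempty := ⟨s, (hmem _).2 (Or.inl rfl)⟩
  -- extremes
  have hgmx : mxF (gmap S) = b - 1 := by
    refine le_antisymm ?_ ?_
    · have := mx_mem hgne
      rw [hmem] at this
      rcases this with h | h | ⟨h, hne'⟩
      · omega
      · omega
      · have := le_mx hne h; omega
    · refine le_mx hgne ?_
      rw [hmem]
      rcases Nat.lt_or_ge 1 s with hs1 | hs1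
      · exact Or.inr (Or.inr ⟨sig_run hne h0 (by omega) (by omega), by omega⟩)
      · exact Or.inr (Or.inl (by omega))
  have hgmn : mnF (gmap S) = s := by
    refine le_antisymm (mn_le hgne ((hmem _).2 (Or.inl rfl))) ?_
    have := mn_mem hgne
    rw [hmem] at this
    rcases this with h | h | ⟨h, -⟩
    · omega
    · omega
    · have := mn_le hne h; omega
  have hgsig : s ≤ sigF (gmap S) := by
    refine sig_ge_of hg0 ?_
    intro j hj
    rw [hgmx, hmem]
    rcases eq_or_ne (b - 1 - j) (b - s) with h | h
    · exact Or.inr (Or.inl h)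
    · exact Or.inr (Or.inr ⟨sig_run hne h0 (by omega) (by omega), by omega⟩)
  have hcond : mnF (gmap S) ≤ sigF (gmap S) := by rw [hgmn]; exact hgsig
  -- involution
  have hinv : gmap (gmap S) = S := by
    rw [gmap, if_pos hcond, hgmn, hgmx]
    have e0 : b - 1 + 1 = b := by omega
    have e1 : b - 1 - s + 1 = b - s := by omega
    rw [e0, e1]
    have e2 : (gmap S).erase s = insert (b - s) (S.erase b) := by rw [hgm, hB', erase_insert hfr2]
    rw [e2, erase_insert hfr1, insert_erase hbS]
  -- not exceptional
  have hgexc : ¬ IsExc (gmap S) := by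
    rintro (hE | hE)
    · have hm2 : s ≤ 2 * s - 1 := by omega
      have hmx2 : mxF (gmap S) = 2 * s - 1 := by
        rw [hE, hgmn] at hgmx ⊢
        rw [mx_Icc hm2]
      omega
    · rcases em (s ≤ 2 * s - 2) with hle | hle
      · have hsg2 : sigF (gmap S) = (2 * s - 2) - s + 1 := by
          rw [hE, hgmn] at hcond hgsig ⊢
          exact sig_Icc (by omega) hle
        omega
      · have : (gmap S).Nonempty := hgne
        rw [hE, hgmn] at this
        obtain ⟨x, hx⟩ := this
        simp only [mem_Icc] at hx
        omega
  exact ⟨hsum, hcard, hgne, hg0, hgexc, hinv⟩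

lemma sum_Icc_two (a b : ℕ) (h1 : 1 ≤ a) (h : a ≤ b) :
    2 * (Icc a b).sum id = (a + b) * (b + 1 - a) := by
  have hset : Icc a b = range (b+1) \ range a := by
    refine Finset.ext (fun x => ?_)
    simp only [mem_Icc, mem_sdiff, mem_range]
    omega
  have hsub : range a ⊆ range (b+1) := Finset.range_subset_range.2 (by omega)
  have hsd : (range (b+1) \ range a).sum id + (range a).sum id = (range (b+1)).sum id :=
    Finset.sum_sdiff hsub
  have g1 : (∑ i ∈ range (b+1), i) * 2 = (b+1) * b := by
    rw [Finset.sum_range_id_mul_two]; simp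
  have g2 : (∑ i ∈ range a, i) * 2 = a * (a - 1) := Finset.sum_range_id_mul_two a
  simp only [id] at hsd ⊢
  rw [hset]
  have hle : a ≤ b + 1 := by omega
  zify [h1, hle] at *
  linarith [hsd, g1, g2]

def pentP (N : ℕ) : Finset (Finset ℕ) :=
  ((range (N+2)).powerset).filter (fun S => 0 ∉ S ∧ S.sum id = N)

lemma mem_pentP {N : ℕ} {S : Finset ℕ} :
    S ∈ pentP N ↔ (S ⊆ range (N+2) ∧ 0 ∉ S ∧ S.sum id = N) := by
  simp [pentP, and_assoc]

lemma le_of_mem_good {N : ℕ} {S : Finset ℕ} (hsum : S.sum id = N) {x : ℕ} (hx : x ∈ S) :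
    x ≤ N := hsum ▸ Finset.single_le_sum (f := id) (fun _ _ => Nat.zero_le _) hx

lemma mem_pentP' {N : ℕ} {S : Finset ℕ} (h0 : 0 ∉ S) (hsum : S.sum id = N) : S ∈ pentP N := by
  rw [mem_pentP]
  exact ⟨fun x hx => mem_range.2 (by have := le_of_mem_good hsum hx; omega), h0, hsum⟩

lemma nonexc_sum (N : ℕ) (hN : 1 ≤ N) :
    ∑ S ∈ (pentP N).filter (fun S => ¬ IsExc S), (-1:ℤ)^S.card = 0 := by
  have key : ∀ S ∈ (pentP N).filter (fun S => ¬ IsExc S),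
      (gmap S).sum id = S.sum id ∧
      ((gmap S).card = S.card + 1 ∨ S.card = (gmap S).card + 1) ∧
      0 ∉ gmap S ∧ ¬ IsExc (gmap S) ∧ gmap (gmap S) = S := by
    intro S hS
    rw [mem_filter, mem_pentP] at hS
    obtain ⟨⟨hsub, h0, hsum⟩, hexc⟩ := hS
    have hne : S.Nonempty := by
      rcases S.eq_empty_or_nonempty with rfl | h
      · simp at hsum; omega
      · exact h
    rcases le_or_gt (mnF S) (sigF S) with hA | hB
    · obtain ⟨a1, a2, _, a4, a5, a6⟩ := caseA_main hne h0 hA hexc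
      exact ⟨a1, Or.inr a2, a4, a5, a6⟩
    · obtain ⟨a1, a2, _, a4, a5, a6⟩ := caseB_main hne h0 (by omega) hexc
      exact ⟨a1, Or.inl a2, a4, a5, a6⟩
  refine Finset.sum_involution (fun S _ => gmap S) ?_ ?_ ?_ ?_
  · intro S hS
    obtain ⟨-, hcard, -, -, -⟩ := key S hS
    rcases hcard with h | h <;> rw [h] <;> ring
  · intro S hS _
    obtain ⟨-, hcard, -, -, -⟩ := key S hS
    intro heq
    replace heq : gmap S = S := heq
    rw [heq] at hcard
    omega
  · intro S hS
    obtain ⟨hsum, -, h0, hexc, -⟩ := key S hS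
    rw [mem_filter, mem_pentP] at hS ⊢
    refine ⟨⟨fun x hx => mem_range.2 ?_, h0, hsum.trans hS.1.2.2⟩, hexc⟩
    have := le_of_mem_good (hsum.trans hS.1.2.2) hx
    omega
  · intro S hS
    exact (key S hS).2.2.2.2

lemma exc_sum (N : ℕ) (hN : 1 ≤ N) :
    ∑ S ∈ (pentP N).filter IsExc, (-1:ℤ)^S.card =
    ∑ n ∈ (Icc (-(N:ℤ)-1) ((N:ℤ)+1)).filter (fun n => 3*n^2 + n = 2*(N:ℤ)),
      (-1:ℤ)^n.natAbs := by
  refine Finset.sum_nbij'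
    (i := fun S => if S = Icc (mnF S) (2*mnF S - 1) then -(mnF S : ℤ) else (mnF S : ℤ) - 1)
    (j := fun n => if n < 0 then Icc n.natAbs (2*n.natAbs - 1) else Icc (n.natAbs + 1) (2*n.natAbs))
    ?_ ?_ ?_ ?_ ?_
  · -- hi : membership forward
    intro S hS
    beta_reduce
    rw [mem_filter, mem_pentP] at hS
    obtain ⟨⟨hsub, h0, hsum⟩, hexc⟩ := hS
    have hne : S.Nonempty := by
      rcases S.eq_empty_or_nonempty with rfl | h
      · simp at hsum; omega
      · exact h
    have ha1 : 1 ≤ mnF S := one_le_mn hne h0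
    have haN : mnF S ≤ N := le_of_mem_good hsum (mn_mem hne)
    set a := mnF S with ha'
    simp only [mem_filter, mem_Icc]
    rcases em (S = Icc a (2*a - 1)) with h1 | h1
    · rw [if_pos h1]
      have hab : a ≤ 2*a - 1 := by omega
      have hs2 : 2 * (Icc a (2*a-1)).sum id = (a + (2*a-1)) * ((2*a-1) + 1 - a) :=
        sum_Icc_two a (2*a-1) ha1 hab
      rw [← h1, hsum] at hs2
      have hs3 : 2 * N = (3 * a - 1) * a := by rw [hs2]; congr 1 <;> omega
      refine ⟨⟨by push_cast; omega, by push_cast; omega⟩, ?_⟩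
      have hz : ((2*N:ℕ):ℤ) = (((3*a-1)*a:ℕ):ℤ) := by rw [hs3]
      push_cast [Nat.cast_sub (show 1 ≤ 3*a by omega)] at hz
      push_cast
      nlinarith [hz]
    · rw [if_neg h1]
      have h2 : S = Icc a (2*a - 2) := hexc.resolve_left h1
      have ha2 : 2 ≤ a := by
        by_contra hcon
        have : a = 1 := by omega
        rw [h2, this] at hne
        simp at hne
      have hab : a ≤ 2*a - 2 := by omega
      have hs2 : 2 * (Icc a (2*a-2)).sum id = (a + (2*a-2)) * ((2*a-2) + 1 - a) :=
        sum_Icc_two a (2*a-2) ha1 hab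
      rw [← h2, hsum] at hs2
      have hs3 : 2 * N = (3 * a - 2) * (a - 1) := by rw [hs2]; congr 1 <;> omega
      refine ⟨⟨by push_cast; omega, by push_cast; omega⟩, ?_⟩
      have hz : ((2*N:ℕ):ℤ) = (((3*a-2)*(a-1):ℕ):ℤ) := by rw [hs3]
      push_cast [Nat.cast_sub (show 2 ≤ 3*a by omega), Nat.cast_sub ha1] at hz
      push_cast
      nlinarith [hz]
  · -- hj : membership backward
    intro n hn
    beta_reduce
    rw [mem_filter, mem_Icc] at hn
    obtain ⟨⟨hn1, hn2⟩, heq⟩ := hn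
    have hn0 : n ≠ 0 := by rintro rfl; simp at heq; omega
    set k := n.natAbs with hk'
    have hk1 : 1 ≤ k := by omega
    rcases lt_or_gt_of_ne hn0 with hneg | hpos
    · rw [if_pos hneg]
      have hnk : n = -(k:ℤ) := by omega
      have hNk : 2 * N + k = 3 * (k * k) := by
        have : (2 * N : ℤ) + k = 3 * (k * k) := by
          rw [hnk] at heq; push_cast at heq ⊢; nlinarith [heq]
        exact_mod_cast this
      have hab : k ≤ 2*k - 1 := by omega
      have hsum : (Icc k (2*k-1)).sum id = N := by
        have hs2 := sum_Icc_two k (2*k-1) hk1 hab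
        have he : (k + (2*k-1)) * ((2*k-1) + 1 - k) = 3 * (k*k) - k := by
          have e1 : (2*k-1) + 1 - k = k := by omega
          rw [e1]
          have hle : k ≤ 3*(k*k) := by nlinarith
          zify [show 1 ≤ 2*k by omega, hle]
          ring
        omega
      have h0 : 0 ∉ Icc k (2*k-1) := by simp; omega
      rw [mem_filter]
      refine ⟨mem_pentP' h0 hsum, ?_⟩
      unfold IsExc
      rw [mn_Icc hab]
      exact Or.inl rfl
    · rw [if_neg (show ¬ (n < 0) by omega)]
      have hnk : n = (k:ℤ) := by omega
      have hNk : 2 * N = 3 * (k * k) + k := by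
        have : (2 * N : ℤ) = 3 * (k * k) + k := by
          rw [hnk] at heq; push_cast at heq ⊢; nlinarith [heq]
        exact_mod_cast this
      have hab : k + 1 ≤ 2*k := by omega
      have hsum : (Icc (k+1) (2*k)).sum id = N := by
        have hs2 := sum_Icc_two (k+1) (2*k) (by omega) hab
        have he : ((k+1) + 2*k) * (2*k + 1 - (k+1)) = 3 * (k*k) + k := by
          have e1 : 2*k + 1 - (k+1) = k := by omega
          rw [e1]; ring
        omega
      have h0 : 0 ∉ Icc (k+1) (2*k) := by simp
      rw [mem_filter]
      refine ⟨mem_pentP' h0 hsum, ?_⟩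
      unfold IsExc
      rw [mn_Icc hab]
      right
      have e : 2*(k+1) - 2 = 2*k := by omega
      rw [e]
  · -- left inverse
    intro S hS
    beta_reduce
    rw [mem_filter, mem_pentP] at hS
    obtain ⟨⟨hsub, h0, hsum⟩, hexc⟩ := hS
    have hne : S.Nonempty := by
      rcases S.eq_empty_or_nonempty with rfl | h
      · simp at hsum; omega
      · exact h
    have ha1 : 1 ≤ mnF S := one_le_mn hne h0
    set a := mnF S with ha'
    rcases em (S = Icc a (2*a - 1)) with h1 | h1
    · simp only [if_pos h1]
      rw [if_pos (by omega : -(a:ℤ) < 0)]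
      have : (-(a:ℤ)).natAbs = a := by omega
      rw [this, h1]
    · have h2 : S = Icc a (2*a - 2) := hexc.resolve_left h1
      have ha2 : 2 ≤ a := by
        by_contra hcon
        have : a = 1 := by omega
        rw [h2, this] at hne
        obtain ⟨x, hx⟩ := hne
        simp at hx
      simp only [if_neg h1]
      rw [if_neg (by omega : ¬ ((a:ℤ) - 1 < 0))]
      have : ((a:ℤ) - 1).natAbs = a - 1 := by omega
      rw [this, h2]
      congr 1 <;> omega
  · -- right inverse
    intro n hn
    beta_reduce
    rw [mem_filter, mem_Icc] at hn
    obtain ⟨⟨hn1, hn2⟩, heq⟩ := hn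
    have hn0 : n ≠ 0 := by rintro rfl; simp at heq; omega
    set k := n.natAbs with hk'
    have hk1 : 1 ≤ k := by omega
    rcases lt_or_gt_of_ne hn0 with hneg | hpos
    · rw [if_pos hneg]
      have hab : k ≤ 2*k - 1 := by omega
      rw [mn_Icc hab]
      rw [if_pos rfl]
      omega
    · rw [if_neg (show ¬ (n < 0) by omega)]
      have hab : k + 1 ≤ 2*k := by omega
      rw [mn_Icc hab]
      have hne2 : Icc (k+1) (2*k) ≠ Icc (k+1) (2*(k+1) - 1) := by
        intro hcon
        have h1 : 2*k + 1 ∈ Icc (k+1) (2*(k+1) - 1) := by simp; omega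
        rw [← hcon] at h1
        simp at h1
      rw [if_neg hne2]
      omega
  · -- weights
    intro S hS
    beta_reduce
    rw [mem_filter, mem_pentP] at hS
    obtain ⟨⟨hsub, h0, hsum⟩, hexc⟩ := hS
    have hne : S.Nonempty := by
      rcases S.eq_empty_or_nonempty with rfl | h
      · simp at hsum; omega
      · exact h
    have ha1 : 1 ≤ mnF S := one_le_mn hne h0
    set a := mnF S with ha'
    rcases em (S = Icc a (2*a - 1)) with h1 | h1
    · simp only [if_pos h1]
      have hcard : S.card = a := by
        rw [h1, Nat.card_Icc]; omega
      have : (-(a:ℤ)).natAbs = a := by omega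
      rw [hcard, this]
    · have h2 : S = Icc a (2*a - 2) := hexc.resolve_left h1
      have ha2 : 2 ≤ a := by
        by_contra hcon
        have : a = 1 := by omega
        rw [h2, this] at hne
        obtain ⟨x, hx⟩ := hne
        simp at hx
      simp only [if_neg h1]
      have hcard : S.card = a - 1 := by
        rw [h2, Nat.card_Icc]; omega
      have : ((a:ℤ) - 1).natAbs = a - 1 := by omega
      rw [hcard, this]

theorem pent_core (N : ℕ) (hN : 1 ≤ N) :
    ∑ S ∈ pentP N, (-1:ℤ)^S.card =
    ∑ n ∈ Finset.Icc (-(N:ℤ)-1) ((N:ℤ)+1),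
      if 3*n^2 + n = 2*(N:ℤ) then (-1:ℤ)^n.natAbs else 0 := by
  rw [← Finset.sum_filter_add_sum_filter_not (pentP N) IsExc, nonexc_sum N hN, add_zero,
    exc_sum N hN]
  exact Finset.sum_filter _ _

lemma pent_step1 (N : ℕ) :
    (PowerSeries.coeff (R := ℤ) N) (∏ n ∈ Finset.range (N+1), (1 - (PowerSeries.X : ℤ⟦X⟧)^(n+1))) =
    ∑ t ∈ (Finset.range (N+1)).powerset,
      if (∑ i ∈ t, (i+1)) = N then (-1:ℤ)^t.card else 0 := by
  have h1 : ∀ n ∈ Finset.range (N+1), (1 - (PowerSeries.X : ℤ⟦X⟧)^(n+1))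
      = (-(PowerSeries.X : ℤ⟦X⟧)^(n+1)) + 1 := by intro n _; ring
  rw [Finset.prod_congr rfl h1, Finset.prod_add]
  rw [map_sum]
  refine Finset.sum_congr rfl ?_
  intro t ht
  simp only [Finset.prod_const_one, mul_one]
  have : ∏ i ∈ t, (-(PowerSeries.X : ℤ⟦X⟧)^(i+1))
      = (-1)^t.card * (PowerSeries.X : ℤ⟦X⟧)^(∑ i ∈ t, (i+1)) := by
    rw [← Finset.prod_pow_eq_pow_sum]
    rw [← Finset.prod_const (-1 : ℤ⟦X⟧), ← Finset.prod_mul_distrib]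
    exact Finset.prod_congr rfl (fun i _ => by ring)
  rw [this]
  rcases eq_or_ne (∑ i ∈ t, (i+1)) N with h | h
  · simp only [h]
    rw [show ((-1:ℤ⟦X⟧)^t.card * X^N) = (PowerSeries.C (R := ℤ) ((-1)^t.card)) * X^N by simp, PowerSeries.coeff_C_mul, PowerSeries.coeff_X_pow]
    simp
  · simp only [h]
    rw [show ((-1:ℤ⟦X⟧)^t.card * X^(∑ i ∈ t, (i+1))) = (PowerSeries.C (R := ℤ) ((-1)^t.card)) * X^(∑ i ∈ t, (i+1)) by simp, PowerSeries.coeff_C_mul, PowerSeries.coeff_X_pow]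
    simp [Ne.symm h]

lemma pent_step2 (N : ℕ) :
    ∑ t ∈ (Finset.range (N+1)).powerset,
      (if (∑ i ∈ t, (i+1)) = N then (-1:ℤ)^t.card else 0) =
    ∑ S ∈ pentP N, (-1:ℤ)^S.card := by
  rw [← Finset.sum_filter]
  refine Finset.sum_nbij' (i := fun t => t.image (· + 1)) (j := fun S => S.image (· - 1))
    ?_ ?_ ?_ ?_ ?_
  · intro t ht
    simp only [mem_filter, mem_powerset] at ht
    rw [mem_pentP]
    refine ⟨?_, ?_, ?_⟩
    · intro x hx
      simp only [mem_image] at hx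
      obtain ⟨i, hi, rfl⟩ := hx
      have := ht.1 hi
      simp only [mem_range] at this ⊢
      omega
    · simp
    · rw [Finset.sum_image (by intro x _ y _ h; simp only at h; omega)]
      exact ht.2
  · intro S hS
    rw [mem_pentP] at hS
    obtain ⟨hsub, h0, hsum⟩ := hS
    have hpos : ∀ x ∈ S, 1 ≤ x := fun x hx => Nat.one_le_iff_ne_zero.2 (fun h => h0 (h ▸ hx))
    simp only [mem_filter, mem_powerset]
    constructor
    · intro x hx
      simp only [mem_image] at hx
      obtain ⟨i, hi, rfl⟩ := hx
      have := le_of_mem_good hsum hi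
      simp only [mem_range]; omega
    · rw [Finset.sum_image (by intro x hx y hy h; simp only at h; have := hpos x hx; have := hpos y hy; omega)]
      rw [← hsum]
      exact Finset.sum_congr rfl (fun x hx => by have := hpos x hx; simp [id]; omega)
  · intro t ht
    rw [Finset.image_image]
    refine Finset.ext (fun x => ?_)
    simp only [mem_image, Function.comp_apply]
    constructor
    · rintro ⟨i, hi, rfl⟩; simpa using hi
    · intro hx; exact ⟨x, hx, by omega⟩
  · intro S hS
    rw [mem_pentP] at hS
    have hpos : ∀ x ∈ S, 1 ≤ x := fun x hx => Nat.one_le_iff_ne_zero.2 (fun h => hS.2.1 (h ▸ hx))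
    rw [Finset.image_image]
    refine Finset.ext (fun x => ?_)
    simp only [mem_image, Function.comp_apply]
    constructor
    · rintro ⟨i, hi, rfl⟩; have := hpos i hi; simpa [Nat.sub_add_cancel this] using hi
    · intro hx; refine ⟨x, hx, ?_⟩; have := hpos x hx; show x - 1 + 1 = x; omega
  · intro t ht
    rw [Finset.card_image_of_injective _ (fun x y h => by simpa using h)]

end PentagonalAux

theorem stmt_13 :
    ∀ N : ℕ,
      (PowerSeries.coeff (R := ℤ) N) (∏ n ∈ Finset.range (N+1), (1 - (PowerSeries.X : ℤ⟦X⟧)^(n+1))) =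
        ∑ n ∈ Finset.Icc (-(N:ℤ)-1) ((N:ℤ)+1),
          if 3*n^2 + n = 2*(N:ℤ) then (-1)^n.natAbs else 0 := by
  intro N
  rw [pent_step1, pent_step2]
  rcases Nat.eq_zero_or_pos N with rfl | hN
  · have hp : pentP 0 = {∅} := by
      refine Finset.ext (fun S => ?_)
      rw [mem_pentP]
      simp only [Finset.mem_singleton]
      constructor
      · rintro ⟨-, h0, hsum⟩
        rcases S.eq_empty_or_nonempty with rfl | ⟨x, hx⟩
        · rfl
        · exfalso
          have := le_of_mem_good hsum hx
          interval_cases x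
          exact h0 hx
      · rintro rfl
        simp
    rw [hp]
    simp only [Finset.sum_singleton, Finset.card_empty, pow_zero]
    decide
  · exact pent_core N hN
end

section
/- (Jacobi's identity, specialization z=4 of Nekrasov–Okounkov) As formal power series, ∏_{n≥1} (1 - x^n)^3 = ∑_{n≥0} (-1)^n (2n+1) x^{n(n+1)/2}. -/
open PowerSeries Finset

namespace Jac

def T : ℕ → ℕ
  | 0 => 0
  | k+1 => T k + k + 1

lemma T_eq (k : ℕ) : T k = k * (k+1) / 2 := by
  induction k with
  | zero => rfl
  | succ k ih =>
    rw [T, ih]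
    have h : (k+1) * (k+1+1) = k*(k+1) + 2*(k+1) := by ring
    omega

lemma T_ge (k : ℕ) : k ≤ T k := by
  induction k with
  | zero => simp [T]
  | succ k ih => rw [T]; omega

noncomputable def E (n : ℕ) : ℤ⟦X⟧ := ∏ j ∈ Finset.range n, (1 - (PowerSeries.X : ℤ⟦X⟧)^(j+1))

lemma E_zero : E 0 = 1 := by simp [E]

lemma E_succ (n : ℕ) : E (n+1) = E n * (1 - (PowerSeries.X : ℤ⟦X⟧)^(n+1)) := by
  simp [E, Finset.prod_range_succ]

lemma constantCoeff_E (n : ℕ) : constantCoeff (E n) = 1 := by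
  rw [E, map_prod]
  apply Finset.prod_eq_one
  intro j _
  simp

lemma E_ne_zero (n : ℕ) : E n ≠ 0 := by
  intro h
  have := constantCoeff_E n
  rw [h] at this
  simp at this

noncomputable def G : ℕ → ℕ → ℤ⟦X⟧
  | _, 0 => 1
  | 0, _+1 => 0
  | m+1, k+1 => G m k + (PowerSeries.X : ℤ⟦X⟧)^(k+1) * G m (k+1)

@[simp] lemma G_zero_right (m : ℕ) : G m 0 = 1 := by cases m <;> rfl

@[simp] lemma G_zero_left (k : ℕ) : G 0 (k+1) = 0 := rfl

lemma G_succ (m k : ℕ) : G (m+1) (k+1) = G m k + (PowerSeries.X : ℤ⟦X⟧)^(k+1) * G m (k+1) := rfl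

lemma G_eq_zero (m k : ℕ) (h : m < k) : G m k = 0 := by
  induction m generalizing k with
  | zero => cases k with
    | zero => omega
    | succ k => rfl
  | succ m ih =>
    cases k with
    | zero => omega
    | succ k => rw [G_succ, ih k (by omega), ih (k+1) (by omega)]; ring

lemma G_diag (m : ℕ) : G m m = 1 := by
  induction m with
  | zero => rfl
  | succ m ih => rw [G_succ, ih, G_eq_zero m (m+1) (by omega)]; ring

lemma G_one (m : ℕ) : G m 1 = ∑ j ∈ Finset.range m, (PowerSeries.X : ℤ⟦X⟧)^j := by
  induction m with
  | zero => simp [G_eq_zero]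
  | succ m ih =>
    rw [G_succ, ih, G_zero_right, Finset.sum_range_succ', Finset.mul_sum]
    simp [pow_succ, mul_comm, add_comm]


lemma G_pascal2 (m k : ℕ) : G (m+1) (k+1) = (PowerSeries.X : ℤ⟦X⟧)^(m-k) * G m k + G m (k+1) := by
  induction m generalizing k with
  | zero =>
    cases k with
    | zero => simp [G_succ, G_eq_zero]
    | succ k =>
      rw [G_succ, G_eq_zero 0 (k+1) (by omega), G_eq_zero 0 (k+2) (by omega)]
      ring
  | succ m ih =>
    cases k with
    | zero =>
      rw [G_succ, G_zero_right, G_one]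
      nth_rw 1 [geom_sum_succ' (x := (PowerSeries.X:ℤ⟦X⟧)) (n := m)]
      nth_rw 1 [geom_sum_succ (x := (PowerSeries.X:ℤ⟦X⟧)) (n := m)]
      simp only [Nat.sub_zero]
      ring
    | succ k =>
      by_cases hk : k + 1 ≤ m
      · obtain ⟨d, hd⟩ : ∃ d, m = k + 1 + d := ⟨m - (k+1), by omega⟩
        subst hd
        have ih1 := ih k
        have ih2 := ih (k+1)
        rw [G_succ, G_succ]
        have e1 : k + 1 + d - k = d + 1 := by omega
        have e2 : k + 1 + d - (k+1) = d := by omega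
        have e3 : k + 1 + d + 1 - (k + 1) = d + 1 := by omega
        rw [e1] at ih1; rw [e2] at ih2; rw [e3]
        rw [G_succ] at *
        linear_combination ih1 + (PowerSeries.X:ℤ⟦X⟧)^(k+2) * ih2
      · rcases Nat.lt_or_ge m k with hm | hm
        · rw [G_eq_zero (m+1) (k+1) (by omega), G_eq_zero (m+1) (k+1+1) (by omega),
            G_eq_zero (m+1+1) (k+1+1) (by omega)]
          ring
        · have hkm : k = m := by omega
          subst hkm
          rw [G_diag, G_eq_zero (k+1) (k+2) (by omega), G_diag]
          simp

lemma G_mix (m k : ℕ) : G (m+2) (k+2) =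
    (PowerSeries.X : ℤ⟦X⟧)^(m-k) * G m k
      + (1 + (PowerSeries.X : ℤ⟦X⟧)^(m+1)) * G m (k+1)
      + (PowerSeries.X : ℤ⟦X⟧)^(k+2) * G m (k+2) := by
  rw [G_succ (m+1) (k+1), G_pascal2 m k, G_pascal2 m (k+1)]
  by_cases hk : k + 1 ≤ m
  · obtain ⟨d, hd⟩ : ∃ d, m = k + 1 + d := ⟨m - (k+1), by omega⟩
    subst hd
    have e1 : k + 1 + d - k = d + 1 := by omega
    have e2 : k + 1 + d - (k+1) = d := by omega
    rw [e1, e2]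
    ring
  · rw [G_eq_zero m (k+1) (by omega)]
    ring

lemma mulE (m : ℕ) : ∀ k, k ≤ m → E k * E (m-k) * G m k = E m := by
  induction m with
  | zero =>
    intro k hk
    interval_cases k
    simp [E_zero]
  | succ m ih =>
    intro k hmk
    cases k with
    | zero => simp [E_zero]
    | succ k =>
      by_cases hk : k + 1 ≤ m
      · obtain ⟨d, hd⟩ : ∃ d, m = k + 1 + d := ⟨m - (k+1), by omega⟩
        subst hd
        have ihA := ih k (by omega)
        have ihB := ih (k+1) (by omega)
        have e1 : k + 1 + d - k = d + 1 := by omega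
        have e2 : k + 1 + d - (k+1) = d := by omega
        have e3 : k + 1 + d + 1 - (k+1) = d + 1 := by omega
        rw [e1] at ihA; rw [e2] at ihB; rw [e3]
        rw [G_succ, E_succ k, E_succ d, E_succ (k+1+d)]
        rw [E_succ d] at ihA; rw [E_succ k] at ihB
        linear_combination (1 - (PowerSeries.X:ℤ⟦X⟧)^(k+1)) * ihA
          + (PowerSeries.X:ℤ⟦X⟧)^(k+1) * (1 - (PowerSeries.X:ℤ⟦X⟧)^(d+1)) * ihB
      · have hkm : k = m := by omega
        subst hkm
        rw [G_diag]
        simp [E_zero]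

def tri (n i : ℕ) : ℕ := if n ≤ i then T (i - n) else T (n - i - 1)

noncomputable def cf (n i : ℕ) : ℤ⟦X⟧ := (PowerSeries.X : ℤ⟦X⟧)^(tri n i) * G (2*n) i

lemma cf_eq_zero (n i : ℕ) (h : 2*n < i) : cf n i = 0 := by
  rw [cf, G_eq_zero _ _ h, mul_zero]

noncomputable def S (n : ℕ) : Polynomial ℤ⟦X⟧ :=
  ∑ i ∈ Finset.range (2*n+1), Polynomial.C (cf n i) * Polynomial.X ^ i

lemma coeff_S (n i : ℕ) : (S n).coeff i = cf n i := by
  rw [S, Polynomial.finset_sum_coeff]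
  simp only [Polynomial.coeff_C_mul, Polynomial.coeff_X_pow, mul_ite, mul_one, mul_zero]
  rw [Finset.sum_ite_eq (Finset.range (2*n+1)) i (fun j => cf n j)]
  split
  · rfl
  · rw [cf_eq_zero]
    simp_all

lemma T_succ (k : ℕ) : T (k+1) = T k + k + 1 := rfl

lemma Gsum2 (M : ℕ) : G (M+2) 1 = (PowerSeries.X:ℤ⟦X⟧) * G M 1 + 1 + (PowerSeries.X:ℤ⟦X⟧)^(M+1) := by
  rw [G_one, G_one, Finset.sum_range_succ, geom_sum_succ]

lemma cf_rec0 (n : ℕ) : cf (n+1) 0 = (PowerSeries.X:ℤ⟦X⟧)^n * cf n 0 := by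
  cases n with
  | zero => simp [cf, tri, T]
  | succ m =>
    simp only [cf, tri, G_zero_right, mul_one]
    rw [if_neg (by omega), if_neg (by omega)]
    rw [show m+1+1-0-1 = m+1 from by omega, show m+1-0-1 = m from by omega, T_succ, ← pow_add]
    congr 1
    omega

lemma cf_rec1 (n : ℕ) :
    cf (n+1) 1 = (PowerSeries.X:ℤ⟦X⟧)^n * cf n 1
      + (1 + (PowerSeries.X:ℤ⟦X⟧)^(2*n+1)) * cf n 0 := by
  match n with
  | 0 =>
    have h21 : G 2 1 = 1 + (PowerSeries.X:ℤ⟦X⟧) := by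
      rw [G_one]; simp [Finset.sum_range_succ]
    simp only [cf, tri]
    norm_num
    rw [h21]
    simp [T]
  | 1 =>
    have h41 : G 4 1 = (PowerSeries.X:ℤ⟦X⟧) * G 2 1 + 1 + (PowerSeries.X:ℤ⟦X⟧)^3 := Gsum2 2
    simp only [cf, tri]
    norm_num
    rw [h41]
    simp [T]
    ring
  | (p+2) =>
    simp only [cf, tri, G_zero_right, mul_one]
    rw [if_neg (by omega), if_neg (by omega), if_neg (by omega)]
    rw [show p+2+1-1-1 = p+1 from by omega, show p+2-1-1 = p from by omega,
        show p+2-0-1 = p+1 from by omega]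
    rw [show 2*(p+2+1) = 2*(p+2)+2 from by ring, Gsum2]
    rw [T_succ p]
    ring

lemma cf_rec2 (n i : ℕ) :
    cf (n+1) (i+2) = (PowerSeries.X:ℤ⟦X⟧)^n * cf n (i+2)
      + (1 + (PowerSeries.X:ℤ⟦X⟧)^(2*n+1)) * cf n (i+1)
      + (PowerSeries.X:ℤ⟦X⟧)^(n+1) * cf n i := by
  rcases le_or_gt n i with hni | hni
  · rcases le_or_gt i (2*n) with hi2 | hi2
    · obtain ⟨k, rfl⟩ : ∃ k, i = n + k := ⟨i - n, by omega⟩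
      obtain ⟨d, rfl⟩ : ∃ d, n = k + d := ⟨n - k, by omega⟩
      simp only [cf, tri]
      rw [if_pos (by omega), if_pos (by omega), if_pos (by omega), if_pos (by omega)]
      rw [show k+d+k+2 - (k+d+1) = k+1 from by omega,
          show k+d+k+2 - (k+d) = k+2 from by omega,
          show k+d+k+1 - (k+d) = k+1 from by omega,
          show k+d+k - (k+d) = k from by omega]
      rw [show 2*(k+d+1) = 2*(k+d)+2 from by ring]
      rw [show (k+d+k+2 : ℕ) = (k+d+k)+2 from by ring]
      rw [G_mix (2*(k+d)) (k+d+k)]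
      rw [show 2*(k+d) - (k+d+k) = d from by omega]
      rw [T_succ (k+1), T_succ k]
      ring
    · -- i > 2n : everything vanishes
      rw [cf_eq_zero n (i+2) (by omega), cf_eq_zero n (i+1) (by omega),
        cf_eq_zero n i (by omega), cf_eq_zero (n+1) (i+2) (by omega)]
      ring
  · rcases Nat.lt_or_ge (i+1) n with h1 | h1
    · rcases Nat.lt_or_ge (i+2) n with h2 | h2
      · -- i + 3 ≤ n
        obtain ⟨s, rfl⟩ : ∃ s, n = i + 3 + s := ⟨n - (i+3), by omega⟩
        simp only [cf, tri]
        rw [if_neg (by omega), if_neg (by omega), if_neg (by omega), if_neg (by omega)]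
        rw [show i+3+s+1 - (i+2) - 1 = s+1 from by omega,
            show i+3+s - (i+2) - 1 = s from by omega,
            show i+3+s - (i+1) - 1 = s+1 from by omega,
            show i+3+s - i - 1 = s+2 from by omega]
        rw [show 2*(i+3+s+1) = 2*(i+3+s)+2 from by ring]
        rw [G_mix (2*(i+3+s)) i]
        rw [show 2*(i+3+s) - i = i + 2*s + 6 from by omega]
        rw [T_succ (s+1), T_succ s]
        ring
      · -- i + 2 = n
        obtain rfl : n = i + 2 := by omega
        simp only [cf, tri]
        rw [if_neg (by omega), if_pos (by omega), if_neg (by omega), if_neg (by omega)]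
        rw [show i+2+1 - (i+2) - 1 = 0 from by omega,
            show i+2 - (i+2) = 0 from by omega,
            show i+2 - (i+1) - 1 = 0 from by omega,
            show i+2 - i - 1 = 1 from by omega]
        rw [show 2*(i+2+1) = 2*(i+2)+2 from by ring]
        rw [G_mix (2*(i+2)) i]
        rw [show 2*(i+2) - i = i + 4 from by omega]
        simp [T]
        ring
    · -- i + 1 = n
      obtain rfl : n = i + 1 := by omega
      simp only [cf, tri]
      rw [if_pos (by omega), if_pos (by omega), if_pos (by omega), if_neg (by omega)]
      rw [show i+2 - (i+1+1) = 0 from by omega,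
          show i+2 - (i+1) = 1 from by omega,
          show i+1 - (i+1) = 0 from by omega,
          show i+1 - i - 1 = 0 from by omega]
      rw [show 2*(i+1+1) = 2*(i+1)+2 from by ring]
      rw [G_mix (2*(i+1)) i]
      rw [show 2*(i+1) - i = i + 2 from by omega]
      simp [T]
      ring

noncomputable def L (n : ℕ) : Polynomial ℤ⟦X⟧ :=
  (∏ j ∈ Finset.range n, (1 + Polynomial.C ((PowerSeries.X:ℤ⟦X⟧)^(j+1)) * Polynomial.X)) *
  (∏ j ∈ Finset.range n, (Polynomial.X + Polynomial.C ((PowerSeries.X:ℤ⟦X⟧)^j)))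

lemma S_succ (n : ℕ) :
    S (n+1) = S n * ((1 + Polynomial.C ((PowerSeries.X:ℤ⟦X⟧)^(n+1)) * Polynomial.X) *
      (Polynomial.X + Polynomial.C ((PowerSeries.X:ℤ⟦X⟧)^n))) := by
  have hB : (1 + Polynomial.C ((PowerSeries.X:ℤ⟦X⟧)^(n+1)) * Polynomial.X) *
      (Polynomial.X + Polynomial.C ((PowerSeries.X:ℤ⟦X⟧)^n))
      = Polynomial.C ((PowerSeries.X:ℤ⟦X⟧)^n)
        + Polynomial.C (1 + (PowerSeries.X:ℤ⟦X⟧)^(2*n+1)) * Polynomial.X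
        + Polynomial.C ((PowerSeries.X:ℤ⟦X⟧)^(n+1)) * Polynomial.X^2 := by
    rw [show 2*n+1 = (n+1)+n from by omega]
    simp only [pow_add, Polynomial.C_add, Polynomial.C_1, Polynomial.C_mul]
    ring
  rw [hB]
  have hS : S n * (Polynomial.C ((PowerSeries.X:ℤ⟦X⟧)^n)
        + Polynomial.C (1 + (PowerSeries.X:ℤ⟦X⟧)^(2*n+1)) * Polynomial.X
        + Polynomial.C ((PowerSeries.X:ℤ⟦X⟧)^(n+1)) * Polynomial.X^2)
      = (Polynomial.C ((PowerSeries.X:ℤ⟦X⟧)^n) * S n) * Polynomial.X^0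
        + (Polynomial.C (1 + (PowerSeries.X:ℤ⟦X⟧)^(2*n+1)) * S n) * Polynomial.X^1
        + (Polynomial.C ((PowerSeries.X:ℤ⟦X⟧)^(n+1)) * S n) * Polynomial.X^2 := by ring
  rw [hS]
  apply Polynomial.ext
  intro i
  simp only [Polynomial.coeff_add, Polynomial.coeff_mul_X_pow', Polynomial.coeff_C_mul, coeff_S]
  match i with
  | 0 =>
    norm_num
    exact cf_rec0 n
  | 1 =>
    norm_num
    exact cf_rec1 n
  | (i+2) =>
    rw [if_pos (by omega), if_pos (by omega), if_pos (by omega)]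
    rw [show i+2-1 = i+1 from by omega, show i+2-2 = i from by omega,
        show i+2-0 = i+2 from by omega]
    rw [cf_rec2 n i]

lemma TP (n : ℕ) : L n = S n := by
  induction n with
  | zero =>
    rw [L, S]
    simp [cf, tri, T]
  | succ n ih =>
    rw [L, Finset.prod_range_succ, Finset.prod_range_succ, S_succ, ← ih, L]
    ring

lemma derivS (n : ℕ) :
    Polynomial.eval (-1 : ℤ⟦X⟧) (Polynomial.derivative (S n))
      = ∑ i ∈ Finset.range (2*n+1), cf n i * i * (-1:ℤ⟦X⟧)^(i-1) := by
  rw [S, map_sum, Polynomial.eval_finset_sum]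
  apply Finset.sum_congr rfl
  intro i _
  rw [Polynomial.derivative_C_mul, Polynomial.derivative_X_pow,
    Polynomial.eval_mul, Polynomial.eval_mul, Polynomial.eval_C, Polynomial.eval_C,
    Polynomial.eval_pow, Polynomial.eval_X]
  ring

lemma derivL (m : ℕ) :
    Polynomial.eval (-1 : ℤ⟦X⟧) (Polynomial.derivative (L (m+1)))
      = E (m+1) * ((-1:ℤ⟦X⟧)^m * E m) := by
  have hQ : (∏ j ∈ Finset.range (m+1), (Polynomial.X + Polynomial.C ((PowerSeries.X:ℤ⟦X⟧)^j)))
      = (∏ j ∈ Finset.range m, (Polynomial.X + Polynomial.C ((PowerSeries.X:ℤ⟦X⟧)^(j+1))))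
        * (Polynomial.X + 1) := by
    rw [Finset.prod_range_succ']
    simp
  have hL : L (m+1) =
      ((∏ j ∈ Finset.range (m+1), (1 + Polynomial.C ((PowerSeries.X:ℤ⟦X⟧)^(j+1)) * Polynomial.X))
        * (∏ j ∈ Finset.range m, (Polynomial.X + Polynomial.C ((PowerSeries.X:ℤ⟦X⟧)^(j+1)))))
        * (Polynomial.X + 1) := by
    rw [L, hQ]; ring
  have hd : Polynomial.derivative (Polynomial.X + 1 : Polynomial ℤ⟦X⟧) = 1 := by simp
  have he : Polynomial.eval (-1:ℤ⟦X⟧) (Polynomial.X + 1) = 0 := by simp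
  rw [hL, Polynomial.derivative_mul, hd, mul_one, Polynomial.eval_add, Polynomial.eval_mul,
    he, mul_zero, zero_add, Polynomial.eval_mul, Polynomial.eval_prod, Polynomial.eval_prod]
  have h1 : ∀ j ∈ Finset.range (m+1),
      Polynomial.eval (-1:ℤ⟦X⟧) (1 + Polynomial.C ((PowerSeries.X:ℤ⟦X⟧)^(j+1)) * Polynomial.X)
        = 1 - (PowerSeries.X:ℤ⟦X⟧)^(j+1) := by
    intro j _
    simp
    ring
  have h2 : ∀ j ∈ Finset.range m,
      Polynomial.eval (-1:ℤ⟦X⟧) (Polynomial.X + Polynomial.C ((PowerSeries.X:ℤ⟦X⟧)^(j+1)))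
        = (-1) * (1 - (PowerSeries.X:ℤ⟦X⟧)^(j+1)) := by
    intro j _
    simp
    ring
  rw [Finset.prod_congr rfl h1, Finset.prod_congr rfl h2, Finset.prod_mul_distrib,
    Finset.prod_const]
  rw [E, E, Finset.card_range]

lemma KEY2 (m : ℕ) :
    E (m+1) * E m
      = ∑ i ∈ Finset.range (2*m+2), (-1:ℤ⟦X⟧)^(m+i) * (i+1) * cf (m+1) (i+1) := by
  have h := derivL m
  rw [TP, derivS] at h
  have h2 : (2*(m+1)+1) = (2*m+2)+1 := by ring
  rw [h2, Finset.sum_range_succ'] at h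
  simp only [Nat.cast_zero, mul_zero, zero_mul, add_zero] at h
  have h4 : ((-1:ℤ⟦X⟧))^m * ((-1:ℤ⟦X⟧))^m = 1 := by
    rw [← pow_add, ← two_mul, pow_mul]
    norm_num
  have hsum : ∑ i ∈ Finset.range (2*m+2), (-1:ℤ⟦X⟧)^(m+i) * (i+1) * cf (m+1) (i+1)
      = (-1:ℤ⟦X⟧)^m * ∑ i ∈ Finset.range (2*m+2), cf (m+1) (i+1) * (((i+1 : ℕ)) : ℤ⟦X⟧) * (-1:ℤ⟦X⟧)^(i+1-1) := by
    rw [Finset.mul_sum]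
    refine Finset.sum_congr rfl ?_
    intro i _
    rw [show i+1-1 = i from rfl]
    push_cast
    ring
  rw [hsum, h, show (-1:ℤ⟦X⟧)^m * (E (m+1) * ((-1:ℤ⟦X⟧)^m * E m))
      = ((-1:ℤ⟦X⟧)^m * (-1:ℤ⟦X⟧)^m) * (E (m+1) * E m) from by ring, h4, one_mul]

lemma oneSub (d : ℕ) (s : Finset ℕ) (h : ∀ j ∈ s, d ≤ j + 1) :
    ∃ v, ∏ j ∈ s, (1 - (PowerSeries.X:ℤ⟦X⟧)^(j+1)) = 1 + (PowerSeries.X:ℤ⟦X⟧)^d * v := by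
  induction s using Finset.induction with
  | empty => exact ⟨0, by simp⟩
  | @insert a t hx hins =>
    obtain ⟨v, hv⟩ := hins (fun j hj => h j (Finset.mem_insert_of_mem hj))
    rw [Finset.prod_insert hx, hv]
    have ha : d ≤ a + 1 := h a (Finset.mem_insert_self a t)
    refine ⟨-(PowerSeries.X:ℤ⟦X⟧)^(a+1-d) * (1 + (PowerSeries.X:ℤ⟦X⟧)^d * v) + v, ?_⟩
    have hpow : (PowerSeries.X:ℤ⟦X⟧)^(a+1) = (PowerSeries.X:ℤ⟦X⟧)^d * (PowerSeries.X:ℤ⟦X⟧)^(a+1-d) := by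
      rw [← pow_add]
      congr 1
      omega
    rw [hpow]
    ring

lemma EG (n k : ℕ) (hk : k ≤ n) :
    (∃ v, E n * G (2*n) (n+k) = 1 + (PowerSeries.X:ℤ⟦X⟧)^(n-k+1) * v) ∧
    (∃ v, E n * G (2*n) (n-k) = 1 + (PowerSeries.X:ℤ⟦X⟧)^(n-k+1) * v) := by
  have key : ∀ j, E (n-k) * E (n+k) * G (2*n) j = E (2*n) →
      ∃ v, E n * G (2*n) j = 1 + (PowerSeries.X:ℤ⟦X⟧)^(n-k+1) * v := by
    intro j hj
    obtain ⟨v₁, hv₁⟩ := oneSub (n-k+1) (Finset.Ico (n-k) n) (by intro x hx; simp at hx; omega)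
    obtain ⟨v₂, hv₂⟩ := oneSub (n-k+1) (Finset.Ico (n+k) (2*n)) (by intro x hx; simp at hx; omega)
    have hcancel : (E (n-k) * E (n+k)) * (E n * G (2*n) j)
        = (E (n-k) * E (n+k)) * ((∏ j ∈ Finset.Ico (n-k) n, (1 - (PowerSeries.X:ℤ⟦X⟧)^(j+1)))
          * (∏ j ∈ Finset.Ico (n+k) (2*n), (1 - (PowerSeries.X:ℤ⟦X⟧)^(j+1)))) := by
      have e1 : E (n-k) * (∏ j ∈ Finset.Ico (n-k) n, (1 - (PowerSeries.X:ℤ⟦X⟧)^(j+1))) = E n := by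
        rw [E, E]; exact Finset.prod_range_mul_prod_Ico _ (by omega)
      have e2 : E (n+k) * (∏ j ∈ Finset.Ico (n+k) (2*n), (1 - (PowerSeries.X:ℤ⟦X⟧)^(j+1))) = E (2*n) := by
        rw [E, E]; exact Finset.prod_range_mul_prod_Ico _ (by omega)
      calc (E (n-k) * E (n+k)) * (E n * G (2*n) j) = E n * (E (n-k) * E (n+k) * G (2*n) j) := by ring
        _ = E n * E (2*n) := by rw [hj]
        _ = (E (n-k) * E (n+k)) * ((∏ j ∈ Finset.Ico (n-k) n, (1 - (PowerSeries.X:ℤ⟦X⟧)^(j+1)))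
          * (∏ j ∈ Finset.Ico (n+k) (2*n), (1 - (PowerSeries.X:ℤ⟦X⟧)^(j+1)))) := by
            rw [← e1, ← e2]; ring
    have hne : (E (n-k) * E (n+k)) ≠ 0 := mul_ne_zero (E_ne_zero _) (E_ne_zero _)
    have := mul_left_cancel₀ hne hcancel
    rw [this, hv₁, hv₂]
    exact ⟨v₁ + v₂ + (PowerSeries.X:ℤ⟦X⟧)^(n-k+1) * (v₁ * v₂), by ring⟩
  constructor
  · apply key
    have := mulE (2*n) (n+k) (by omega)
    rw [show 2*n - (n+k) = n-k from by omega] at this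
    rw [show E (n-k) * E (n+k) = E (n+k) * E (n-k) from by ring]
    exact this
  · apply key
    have := mulE (2*n) (n-k) (by omega)
    rw [show 2*n - (n-k) = n+k from by omega] at this
    exact this

lemma coeff_pick (N t d : ℕ) (v : ℤ⟦X⟧) (h : N < t + d) :
    (PowerSeries.coeff N) ((PowerSeries.X:ℤ⟦X⟧)^t * (1 + (PowerSeries.X:ℤ⟦X⟧)^d * v))
      = if t = N then 1 else 0 := by
  have hexp : (PowerSeries.X:ℤ⟦X⟧)^t * (1 + (PowerSeries.X:ℤ⟦X⟧)^d * v)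
      = (PowerSeries.X:ℤ⟦X⟧)^t + (PowerSeries.X:ℤ⟦X⟧)^(t+d) * v := by
    rw [pow_add]; ring
  rw [hexp, map_add, PowerSeries.coeff_X_pow]
  have hz : (PowerSeries.coeff N) ((PowerSeries.X:ℤ⟦X⟧)^(t+d) * v) = 0 :=
    PowerSeries.X_pow_dvd_iff.mp (dvd_mul_right _ v) N h
  rw [hz, add_zero]
  by_cases ht : t = N
  · simp [ht]
  · simp [ht, Ne.symm ht]

lemma term (N i : ℕ) (hi : i < 2*N+2) :
    (PowerSeries.coeff N) (E (N+1) * ((-1:ℤ⟦X⟧)^(N+i) * ((i:ℤ⟦X⟧)+1) * cf (N+1) (i+1)))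
      = if tri (N+1) (i+1) = N then ((-1)^(N+i) * ((i:ℤ)+1)) else 0 := by
  obtain ⟨d, v, hdv, hd⟩ : ∃ d v, E (N+1) * G (2*(N+1)) (i+1)
      = 1 + (PowerSeries.X:ℤ⟦X⟧)^d * v ∧ N < tri (N+1) (i+1) + d := by
    rcases le_or_gt (N+1) (i+1) with hcase | hcase
    · obtain ⟨k, hk⟩ : ∃ k, i + 1 = (N+1) + k := ⟨i - N, by omega⟩
      have hkn : k ≤ N+1 := by omega
      obtain ⟨v, hv⟩ := (EG (N+1) k hkn).1
      refine ⟨(N+1)-k+1, v, by rw [hk]; exact hv, ?_⟩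
      have ht : tri (N+1) (i+1) = T k := by
        rw [tri, if_pos hcase, show i+1-(N+1) = k from by omega]
      rw [ht]
      have := T_ge k
      omega
    · obtain ⟨k, hk⟩ : ∃ k, i + 1 = (N+1) - k ∧ 1 ≤ k ∧ k ≤ N+1 := ⟨N - i, by omega⟩
      obtain ⟨v, hv⟩ := (EG (N+1) k hk.2.2).2
      refine ⟨(N+1)-k+1, v, by rw [hk.1]; exact hv, ?_⟩
      have ht : tri (N+1) (i+1) = T (k-1) := by
        rw [tri, if_neg (by omega), show (N+1)-(i+1)-1 = k-1 from by omega]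
      rw [ht]
      have := T_ge (k-1)
      omega
  have hC : ((-1:ℤ⟦X⟧)^(N+i) * ((i:ℤ⟦X⟧)+1))
      = PowerSeries.C ((-1)^(N+i) * ((i:ℤ)+1)) := by
    rw [map_mul, map_pow, map_neg, map_one, map_add, map_one, map_natCast]
  have hterm : E (N+1) * ((-1:ℤ⟦X⟧)^(N+i) * ((i:ℤ⟦X⟧)+1) * cf (N+1) (i+1))
      = PowerSeries.C ((-1)^(N+i) * ((i:ℤ)+1))
        * ((PowerSeries.X:ℤ⟦X⟧)^(tri (N+1) (i+1)) * (1 + (PowerSeries.X:ℤ⟦X⟧)^d * v)) := by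
    rw [← hC, cf, ← hdv]
    ring
  rw [hterm, PowerSeries.coeff_C_mul, coeff_pick N _ d v hd]
  rw [mul_ite, mul_one, mul_zero]

lemma main (N : ℕ) :
    (PowerSeries.coeff N) (E (N+1)^2 * E N)
      = ∑ i ∈ Finset.range (2*N+2),
          (if tri (N+1) (i+1) = N then ((-1)^(N+i) * ((i:ℤ)+1)) else 0) := by
  have h2 := congrArg (fun t => E (N+1) * t) (KEY2 N)
  rw [Finset.mul_sum] at h2
  have h3 : E (N+1)^2 * E N = E (N+1) * (E (N+1) * E N) := by ring
  rw [h3, h2, map_sum]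
  refine Finset.sum_congr rfl ?_
  intro i hi
  rw [Finset.mem_range] at hi
  exact term N i hi

lemma neg_one_pow_congr (a b : ℕ) (h : a % 2 = b % 2) : (-1:ℤ)^a = (-1)^b := by
  rcases Nat.even_or_odd a with ha | ha
  · have hb : Even b := Nat.even_iff.mpr (by have := Nat.even_iff.mp ha; omega)
    rw [ha.neg_one_pow, hb.neg_one_pow]
  · have hb : Odd b := Nat.odd_iff.mpr (by have := Nat.odd_iff.mp ha; omega)
    rw [ha.neg_one_pow, hb.neg_one_pow]

lemma sum_transform (N : ℕ) :
    (∑ i ∈ Finset.range (2*N+2),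
        (if tri (N+1) (i+1) = N then ((-1)^(N+i) * ((i:ℤ)+1)) else 0))
      = ∑ k ∈ Finset.range (N+1), (if T k = N then ((-1)^k * (2*(k:ℤ)+1)) else 0) := by
  set f : ℕ → ℤ := fun i => if tri (N+1) (i+1) = N then ((-1)^(N+i) * ((i:ℤ)+1)) else 0 with hf
  set u : ℕ → ℤ := fun k => if T k = N then ((-1)^k * ((N:ℤ)+k+1)) else 0 with hu
  set l : ℕ → ℤ := fun j => if T j = N then ((-1)^(j+1) * ((N:ℤ)-j)) else 0 with hl
  have hsplit : ∑ i ∈ Finset.range (2*N+2), f i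
      = ∑ i ∈ Finset.range N, f i + ∑ k ∈ Finset.range (N+2), f (N+k) := by
    calc ∑ i ∈ Finset.range (2*N+2), f i = ∑ i ∈ Finset.Ico 0 (2*N+2), f i := by
          rw [Finset.range_eq_Ico]
      _ = ∑ i ∈ Finset.Ico 0 N, f i + ∑ i ∈ Finset.Ico N (2*N+2), f i :=
          (Finset.sum_Ico_consecutive f (by omega) (by omega)).symm
      _ = ∑ i ∈ Finset.range N, f i + ∑ k ∈ Finset.range (N+2), f (N+k) := by
          rw [← Finset.range_eq_Ico, Finset.sum_Ico_eq_sum_range,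
            show 2*N+2-N = N+2 from by omega]
  have hupper : ∀ k ∈ Finset.range (N+2), f (N+k) = u k := by
    intro k _
    have htri : tri (N+1) (N+k+1) = T k := by
      rw [tri, if_pos (by omega)]
      congr 1
      omega
    have hsgn : ((-1:ℤ))^(N+(N+k)) = (-1)^k := neg_one_pow_congr _ _ (by omega)
    simp only [hf, hu]
    rw [htri, hsgn]
    push_cast
    split
    · ring
    · rfl
  have hlower : ∀ i ∈ Finset.range N, f i = l (N-1-i) := by
    intro i hi
    rw [Finset.mem_range] at hi
    have htri : tri (N+1) (i+1) = T (N-1-i) := by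
      rw [tri, if_neg (by omega)]
      congr 1
      omega
    have hsgn : ((-1:ℤ))^(N-1-i+1) = (-1)^(N+i) := neg_one_pow_congr _ _ (by omega)
    have hcast : ((N:ℤ)) - ((N-1-i : ℕ) : ℤ) = (i:ℤ)+1 := by
      have h2 : ((N-1-i : ℕ) : ℤ) = (N:ℤ)-1-i := by omega
      rw [h2]; ring
    simp only [hf, hl]
    rw [htri, ← hsgn, hcast]
  rw [hsplit, Finset.sum_congr rfl hupper, Finset.sum_congr rfl hlower,
    Finset.sum_range_reflect l N]
  rw [Finset.sum_range_succ u (N+1), Finset.sum_range_succ u N]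
  have huN1 : u (N+1) = 0 := by
    simp only [hu]
    rw [if_neg]
    have := T_ge (N+1)
    omega
  rw [huN1, add_zero]
  rw [Finset.sum_range_succ (fun k => if T k = N then ((-1)^k * (2*(k:ℤ)+1)) else 0) N]
  have hgN : u N = (if T N = N then ((-1)^N * (2*(N:ℤ)+1)) else 0) := by
    simp only [hu]
    split
    · ring
    · rfl
  have hcomb : ∑ j ∈ Finset.range N, l j + ∑ k ∈ Finset.range N, u k
      = ∑ k ∈ Finset.range N, (if T k = N then ((-1)^k * (2*(k:ℤ)+1)) else 0) := by
    rw [← Finset.sum_add_distrib]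
    refine Finset.sum_congr rfl ?_
    intro j _
    simp only [hl, hu]
    split
    · rw [pow_succ]
      ring
    · simp
  rw [hgN]
  rw [← add_assoc, hcomb]

end Jac

open Jac in
theorem stmt_14 :
    ∀ N : ℕ,
      (PowerSeries.coeff N) (∏ n ∈ Finset.range (N+1), (1 - (PowerSeries.X : ℤ⟦X⟧)^(n+1))^3) =
        ∑ n ∈ Finset.range (N+1),
          if n*(n+1)/2 = N then ((-1)^n * (2*n+1) : ℤ) else 0 := by
  intro N
  have hprod : ∏ n ∈ Finset.range (N+1), (1 - (PowerSeries.X : ℤ⟦X⟧)^(n+1))^3 = E (N+1)^3 := by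
    rw [E, ← Finset.prod_pow]
  rw [hprod]
  have hE3 : (E (N+1))^3 = E (N+1)^2 * E N - (E (N+1)^2 * E N) * (PowerSeries.X:ℤ⟦X⟧)^(N+1) := by
    have h1 : (E (N+1))^3 = E (N+1)^2 * E (N+1) := by ring
    rw [h1, E_succ N]
    ring
  rw [hE3, map_sub]
  have hz : (PowerSeries.coeff N) ((E (N+1)^2 * E N) * (PowerSeries.X:ℤ⟦X⟧)^(N+1)) = 0 :=
    PowerSeries.X_pow_dvd_iff.mp (dvd_mul_left _ _) N (by omega)
  rw [hz, sub_zero, main N, sum_transform N]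
  refine Finset.sum_congr rfl ?_
  intro k _
  rw [T_eq]
end
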